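/- Graviton stability: let f(q) ∈ q ℤ[[q]] have order α > 0, and define I^f_N(q) = Σ_λ (f_λ(q)/z_λ) Σ_{μ: ℓ(μ)≤N} χ^μ(λ)², where f_λ(q) = ∏_j f(q^{λ_j}) and the outer sum is over all partitions λ. Then the coefficient of q^ℓ in I^f_N(q) equals the coefficient of q^ℓ in I^f_∞(q) = ∏_{k≥1} 1/(1 - f(q^k)) for all ℓ ≤ αN. -/

import Mathlib

open scoped Classical

noncomputable section

/-- `substPowerSeries f k` is the formal power series `f(q^k)`. -/
def substPowerSeries (f : PowerSeries ℤ) (k : ℕ) : PowerSeries ℤ :=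
  PowerSeries.mk fun m => if k ∣ m then PowerSeries.coeff (R := ℤ) (m / k) f else 0

/-- For a partition `λ = 1^{r_1} 2^{r_2} ⋯`, the centralizer size
`z_λ = ∏_i r_i! · i^{r_i}`, as a rational number. -/
def zOf {m : ℕ} (lam : m.Partition) : ℚ :=
  ((lam.parts.toFinsupp.prod fun i r => r.factorial * i ^ r : ℕ) : ℚ)

/-- `f_λ(q) = ∏_j f(q^{λ_j})`. -/
def fProd (f : PowerSeries ℤ) {m : ℕ} (lam : m.Partition) : PowerSeries ℤ :=
  (lam.parts.map fun j => substPowerSeries f j).prod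

namespace GravitonAux

open PowerSeries Finset

variable {f : PowerSeries ℤ} {α : ℕ}

lemma order_subst (hα : 0 < α) (hord : f.order = α) (k : ℕ) :
    (↑(α * k) : ℕ∞) ≤ (substPowerSeries f k).order := by
  apply PowerSeries.nat_le_order
  intro m hm
  simp only [substPowerSeries, PowerSeries.coeff_mk]
  rcases Nat.eq_zero_or_pos k with rfl | hk
  · omega
  split_ifs with h
  · apply PowerSeries.coeff_of_lt_order
    rw [hord]
    exact_mod_cast Nat.div_lt_of_lt_mul (by rwa [mul_comm] at hm)
  · rfl

lemma order_msprod (hα : 0 < α) (hord : f.order = α) (s : Multiset ℕ) :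
    (↑(α * s.sum) : ℕ∞) ≤ ((s.map (substPowerSeries f)).prod).order := by
  induction s using Multiset.induction with
  | empty => simp
  | cons a t ih =>
    simp only [Multiset.map_cons, Multiset.prod_cons, Multiset.sum_cons, Nat.mul_add]
    calc (↑(α * a + α * t.sum) : ℕ∞) = ↑(α * a) + ↑(α * t.sum) := by push_cast; rfl
      _ ≤ (substPowerSeries f a).order + ((t.map (substPowerSeries f)).prod).order :=
          add_le_add (order_subst hα hord a) ih
      _ ≤ _ := PowerSeries.le_order_mul _ _

lemma coeff_fProd_eq_zero (hα : 0 < α) (hord : f.order = α) {n : ℕ} (lam : n.Partition)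
    {m : ℕ} (hm : m < α * n) : PowerSeries.coeff (R := ℤ) m (fProd f lam) = 0 := by
  apply PowerSeries.coeff_of_lt_order
  refine lt_of_lt_of_le ?_ (by simpa [fProd, lam.parts_sum] using order_msprod hα hord lam.parts)
  exact_mod_cast hm

lemma coeff_fProd_eq_zero' (hα : 0 < α) (hord : f.order = α) {n : ℕ} (lam : n.Partition)
    {m : ℕ} (hm : m < n) : PowerSeries.coeff (R := ℤ) m (fProd f lam) = 0 :=
  coeff_fProd_eq_zero hα hord lam (lt_of_lt_of_le hm (Nat.le_mul_of_pos_left n hα))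

/-- Truncated generating function: sum of `f_λ` over partitions with all parts `≤ K`. -/
def GG (f : PowerSeries ℤ) (K : ℕ) : PowerSeries ℤ :=
  PowerSeries.mk fun d =>
    ∑ n ∈ Finset.range (d + 1), ∑ lam : n.Partition,
      if ∀ j ∈ lam.parts, j ≤ K then PowerSeries.coeff (R := ℤ) d (fProd f lam) else 0

lemma coeff_GG (hα : 0 < α) (hord : f.order = α) (K d M : ℕ) (hdM : d ≤ M) :
    PowerSeries.coeff (R := ℤ) d (GG f K) =
      ∑ n ∈ Finset.range (M + 1), ∑ lam : n.Partition,
        if ∀ j ∈ lam.parts, j ≤ K then PowerSeries.coeff (R := ℤ) d (fProd f lam) else 0 := by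
  rw [GG, PowerSeries.coeff_mk]
  apply Finset.sum_subset
  · intro x hx
    simp only [Finset.mem_range] at *
    omega
  · intro n _ hn
    simp only [Finset.mem_range, not_lt] at hn
    apply Finset.sum_eq_zero
    intro lam _
    rw [coeff_fProd_eq_zero' hα hord lam (by omega), ite_self]

lemma GG_zero : GG f 0 = 1 := by
  ext d
  rw [GG, PowerSeries.coeff_mk]
  rw [Finset.sum_eq_single 0]
  · simp only [PowerSeries.coeff_one]
    rw [Finset.sum_eq_single (default : (0:ℕ).Partition)]
    · have hparts : (default : (0:ℕ).Partition).parts = 0 :=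
        Nat.Partition.partition_zero_parts _
      rw [if_pos (by simp [hparts])]
      simp [fProd, hparts, PowerSeries.coeff_one]
    · intro b _ hb; exact absurd (Subsingleton.elim b default) hb
    · intro h; exact absurd (Finset.mem_univ _) h
  · intro n hn hn0
    apply Finset.sum_eq_zero
    intro lam _
    rw [if_neg, ]
    intro hall
    have hne : lam.parts ≠ 0 := by
      intro h0
      apply hn0
      rw [← lam.parts_sum, h0]; rfl
    obtain ⟨j, hj⟩ := Multiset.exists_mem_of_ne_zero hne
    exact absurd (hall j hj) (by have := lam.parts_pos hj; omega)
  · intro h; exact absurd (Finset.mem_range.2 (by omega)) h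

/-- Add a part `k` to a partition. -/
def consPart (k : ℕ) (hk : 0 < k) {m : ℕ} (mu : m.Partition) : (m + k).Partition where
  parts := k ::ₘ mu.parts
  parts_pos := by
    intro i hi
    rcases Multiset.mem_cons.1 hi with rfl | hi
    · exact hk
    · exact mu.parts_pos hi
  parts_sum := by rw [Multiset.sum_cons, mu.parts_sum]; omega

/-- Remove a part `k` from a partition. -/
def erasePart (k : ℕ) {n : ℕ} (lam : n.Partition) (h : k ∈ lam.parts) :
    (n - k).Partition where
  parts := lam.parts.erase k
  parts_pos := fun hi => lam.parts_pos (Multiset.mem_of_mem_erase hi)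
  parts_sum := by
    have h2 : (k ::ₘ lam.parts.erase k).sum = lam.parts.sum := by
      rw [Multiset.cons_erase h]
    rw [Multiset.sum_cons, lam.parts_sum] at h2
    omega

lemma sigmaEq {x y : Σ n : ℕ, n.Partition} (h : x.2.parts = y.2.parts) : x = y := by
  obtain ⟨n, p⟩ := x; obtain ⟨m, q⟩ := y
  simp only at h
  obtain rfl : n = m := by rw [← p.parts_sum, ← q.parts_sum, h]
  exact congrArg _ (Nat.Partition.ext h)

lemma fProd_cons (k : ℕ) (hk : 0 < k) {m : ℕ} (mu : m.Partition) :
    fProd f (consPart k hk mu) = substPowerSeries f k * fProd f mu := by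
  simp [fProd, consPart]

lemma coeff_mul_GG (hα : 0 < α) (hord : f.order = α) (K d : ℕ) :
    PowerSeries.coeff (R := ℤ) d (substPowerSeries f (K+1) * GG f (K+1)) =
      ∑ m ∈ Finset.range (d + 1), ∑ μ : m.Partition,
        if ∀ j ∈ μ.parts, j ≤ K + 1 then
          PowerSeries.coeff (R := ℤ) d (substPowerSeries f (K+1) * fProd f μ) else 0 := by
  rw [PowerSeries.coeff_mul]
  calc ∑ p ∈ Finset.HasAntidiagonal.antidiagonal d,
        PowerSeries.coeff (R := ℤ) p.1 (substPowerSeries f (K+1)) * PowerSeries.coeff (R := ℤ) p.2 (GG f (K+1))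
      = ∑ p ∈ Finset.HasAntidiagonal.antidiagonal d, ∑ m ∈ Finset.range (d + 1), ∑ μ : m.Partition,
          (if ∀ j ∈ μ.parts, j ≤ K + 1 then
            PowerSeries.coeff (R := ℤ) p.1 (substPowerSeries f (K+1)) *
              PowerSeries.coeff (R := ℤ) p.2 (fProd f μ) else 0) := by
        refine Finset.sum_congr rfl fun p hp => ?_
        have hp2 : p.2 ≤ d := by
          have := Finset.HasAntidiagonal.mem_antidiagonal.1 hp; omega
        rw [coeff_GG hα hord (K+1) p.2 d hp2, Finset.mul_sum]
        refine Finset.sum_congr rfl fun m _ => ?_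
        rw [Finset.mul_sum]
        exact Finset.sum_congr rfl fun μ _ => by rw [mul_ite, mul_zero]
    _ = ∑ m ∈ Finset.range (d + 1), ∑ μ : m.Partition, ∑ p ∈ Finset.HasAntidiagonal.antidiagonal d,
          (if ∀ j ∈ μ.parts, j ≤ K + 1 then
            PowerSeries.coeff (R := ℤ) p.1 (substPowerSeries f (K+1)) *
              PowerSeries.coeff (R := ℤ) p.2 (fProd f μ) else 0) := by
        rw [Finset.sum_comm]
        exact Finset.sum_congr rfl fun m _ => Finset.sum_comm
    _ = _ := by
        refine Finset.sum_congr rfl fun m _ => Finset.sum_congr rfl fun μ _ => ?_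
        split_ifs
        · rw [PowerSeries.coeff_mul]
        · exact Finset.sum_const_zero

lemma cons_sum_eq (hα : 0 < α) (hord : f.order = α) (K d : ℕ) :
    (∑ m ∈ Finset.range (d + 1), ∑ μ : m.Partition,
      if ∀ j ∈ μ.parts, j ≤ K + 1 then
        PowerSeries.coeff (R := ℤ) d (substPowerSeries f (K+1) * fProd f μ) else 0) =
    ∑ n ∈ Finset.range (d + 1), ∑ lam : n.Partition,
      if (∀ j ∈ lam.parts, j ≤ K + 1) ∧ (K + 1) ∈ lam.parts then
        PowerSeries.coeff (R := ℤ) d (fProd f lam) else 0 := by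
  have hL : (∑ m ∈ Finset.range (d + 1), ∑ μ : m.Partition,
      if ∀ j ∈ μ.parts, j ≤ K + 1 then
        PowerSeries.coeff (R := ℤ) d (substPowerSeries f (K+1) * fProd f μ) else 0) =
      ∑ x ∈ (Finset.range (d + 1)).sigma
          (fun m => Finset.univ.filter fun μ : m.Partition => ∀ j ∈ μ.parts, j ≤ K + 1),
        PowerSeries.coeff (R := ℤ) d (fProd f (consPart (K+1) (Nat.succ_pos K) x.2)) := by
    rw [Finset.sum_sigma]
    refine Finset.sum_congr rfl fun m _ => ?_
    rw [Finset.sum_filter]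
    refine Finset.sum_congr rfl fun μ _ => ?_
    rw [fProd_cons]
  have hR : (∑ n ∈ Finset.range (d + 1), ∑ lam : n.Partition,
      if (∀ j ∈ lam.parts, j ≤ K + 1) ∧ (K + 1) ∈ lam.parts then
        PowerSeries.coeff (R := ℤ) d (fProd f lam) else 0) =
      ∑ y ∈ (Finset.range (d + 1)).sigma
          (fun n => Finset.univ.filter fun lam : n.Partition =>
            (∀ j ∈ lam.parts, j ≤ K + 1) ∧ (K + 1) ∈ lam.parts),
        PowerSeries.coeff (R := ℤ) d (fProd f y.2) := by
    rw [Finset.sum_sigma]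
    exact Finset.sum_congr rfl fun n _ => (Finset.sum_filter _ _).symm
  rw [hL, hR]
  set S := (Finset.range (d + 1)).sigma
      (fun m => Finset.univ.filter fun μ : m.Partition => ∀ j ∈ μ.parts, j ≤ K + 1) with hS
  set T := (Finset.range (d + 1)).sigma
      (fun n => Finset.univ.filter fun lam : n.Partition =>
        (∀ j ∈ lam.parts, j ≤ K + 1) ∧ (K + 1) ∈ lam.parts) with hT
  rw [show (∑ x ∈ S, PowerSeries.coeff (R := ℤ) d (fProd f (consPart (K+1) (Nat.succ_pos K) x.2))) =
      ∑ x ∈ S.filter (fun x => x.1 + (K + 1) ≤ d),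
        PowerSeries.coeff (R := ℤ) d (fProd f (consPart (K+1) (Nat.succ_pos K) x.2)) from
    (Finset.sum_subset (Finset.filter_subset _ _) (by
      intro x hx hx'
      have : ¬ (x.1 + (K + 1) ≤ d) := by
        intro hc; exact hx' (Finset.mem_filter.2 ⟨hx, hc⟩)
      exact coeff_fProd_eq_zero' hα hord _ (by omega))).symm]
  refine Finset.sum_bij'
    (fun x hx => (⟨x.1 + (K + 1), consPart (K+1) (Nat.succ_pos K) x.2⟩ : Σ n : ℕ, n.Partition))
    (fun y hy => (⟨y.1 - (K + 1),
      erasePart (K+1) y.2 ((Finset.mem_filter.1 (Finset.mem_sigma.1 hy).2).2.2)⟩ :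
        Σ n : ℕ, n.Partition))
    ?_ ?_ ?_ ?_ ?_
  · intro x hx
    obtain ⟨hxS, hxd⟩ := Finset.mem_filter.1 hx
    obtain ⟨hx1, hx2⟩ := Finset.mem_sigma.1 hxS
    have hparts := (Finset.mem_filter.1 hx2).2
    refine Finset.mem_sigma.2 ⟨Finset.mem_range.2 (show x.1 + (K + 1) < d + 1 by omega),
      Finset.mem_filter.2 ⟨Finset.mem_univ _, ?_, ?_⟩⟩
    · intro j hj
      rcases Multiset.mem_cons.1 hj with rfl | hj
      · exact le_refl _
      · exact hparts j hj
    · exact Multiset.mem_cons_self _ _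
  · intro y hy
    obtain ⟨hy1, hy2⟩ := Finset.mem_sigma.1 hy
    obtain ⟨-, hall, hmem⟩ := Finset.mem_filter.1 hy2
    have hk_le : K + 1 ≤ y.1 := by
      have := Multiset.single_le_sum (fun x _ => Nat.zero_le x) _ hmem
      rwa [y.2.parts_sum] at this
    have hy1d : y.1 ≤ d := by have := Finset.mem_range.1 hy1; omega
    refine Finset.mem_filter.2 ⟨Finset.mem_sigma.2
      ⟨Finset.mem_range.2 (show y.1 - (K + 1) < d + 1 by omega),
      Finset.mem_filter.2 ⟨Finset.mem_univ _, ?_⟩⟩,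
      show (y.1 - (K + 1)) + (K + 1) ≤ d by omega⟩
    intro j hj
    exact hall j (Multiset.mem_of_mem_erase hj)
  · intro x hx
    exact sigmaEq (by simp [erasePart, consPart, Multiset.erase_cons_head])
  · intro y hy
    obtain ⟨hy1, hy2⟩ := Finset.mem_sigma.1 hy
    obtain ⟨-, hall, hmem⟩ := Finset.mem_filter.1 hy2
    exact sigmaEq (by simp [erasePart, consPart, Multiset.cons_erase hmem])
  · intro x hx
    rfl

lemma GG_succ (hα : 0 < α) (hord : f.order = α) (K : ℕ) :
    GG f (K+1) * (1 - substPowerSeries f (K+1)) = GG f K := by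
  ext d
  rw [mul_sub, mul_one, map_sub, mul_comm (GG f (K+1)), coeff_mul_GG hα hord K d,
    cons_sum_eq hα hord K d]
  have split : PowerSeries.coeff (R := ℤ) d (GG f (K+1)) = PowerSeries.coeff (R := ℤ) d (GG f K) +
      ∑ n ∈ Finset.range (d + 1), ∑ lam : n.Partition,
        if (∀ j ∈ lam.parts, j ≤ K + 1) ∧ (K + 1) ∈ lam.parts then
          PowerSeries.coeff (R := ℤ) d (fProd f lam) else 0 := by
    rw [GG, GG, PowerSeries.coeff_mk, PowerSeries.coeff_mk, ← Finset.sum_add_distrib]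
    refine Finset.sum_congr rfl fun n _ => ?_
    rw [← Finset.sum_add_distrib]
    refine Finset.sum_congr rfl fun lam _ => ?_
    by_cases h1 : ∀ j ∈ lam.parts, j ≤ K
    · rw [if_pos (fun j hj => le_trans (h1 j hj) (by omega)), if_pos h1, if_neg, add_zero]
      rintro ⟨-, hmem⟩
      exact absurd (h1 _ hmem) (by omega)
    · rw [if_neg h1, zero_add]
      by_cases h2 : ∀ j ∈ lam.parts, j ≤ K + 1
      · have hmem : (K + 1) ∈ lam.parts := by
          push_neg at h1
          obtain ⟨j, hj, hjK⟩ := h1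
          have hj2 := h2 j hj
          have hjeq : j = K + 1 := by omega
          exact hjeq ▸ hj
        rw [if_pos h2, if_pos ⟨h2, hmem⟩]
      · rw [if_neg h2, if_neg (fun hc => h2 hc.1)]
  rw [split]; ring

lemma GG_mul_prod (hα : 0 < α) (hord : f.order = α) (K : ℕ) :
    GG f K * ∏ k ∈ Finset.Icc 1 K, (1 - substPowerSeries f k) = 1 := by
  induction K with
  | zero => simp [GG_zero]
  | succ K ih =>
    rw [Finset.prod_Icc_succ_top (by omega),
      show GG f (K+1) * ((∏ k ∈ Finset.Icc 1 K, (1 - substPowerSeries f k)) *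
          (1 - substPowerSeries f (K+1))) =
        (GG f (K+1) * (1 - substPowerSeries f (K+1))) *
          ∏ k ∈ Finset.Icc 1 K, (1 - substPowerSeries f k) from by ring,
      GG_succ hα hord, ih]

lemma coeff_eq_of_coeff_mul_eq (A X Y : PowerSeries ℤ)
    (hA : PowerSeries.coeff (R := ℤ) 0 A = 1) (L : ℕ)
    (h : ∀ d ≤ L, PowerSeries.coeff (R := ℤ) d (X * A) = PowerSeries.coeff (R := ℤ) d (Y * A)) :
    ∀ d ≤ L, PowerSeries.coeff (R := ℤ) d X = PowerSeries.coeff (R := ℤ) d Y := by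
  intro d
  induction d using Nat.strong_induction_on with
  | _ d ih =>
    intro hd
    have hsum : ∑ p ∈ Finset.HasAntidiagonal.antidiagonal d,
        (PowerSeries.coeff (R := ℤ) p.1 X - PowerSeries.coeff (R := ℤ) p.1 Y) * PowerSeries.coeff (R := ℤ) p.2 A
        = 0 := by
      have := h d hd
      rw [PowerSeries.coeff_mul, PowerSeries.coeff_mul] at this
      rw [← sub_eq_zero] at this
      rw [← this, ← Finset.sum_sub_distrib]
      exact Finset.sum_congr rfl fun p _ => by ring
    rw [Finset.sum_eq_single (d, 0)] at hsum
    · simpa [hA, sub_eq_zero] using hsum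
    · intro p hp hpd
      have hp' := Finset.HasAntidiagonal.mem_antidiagonal.1 hp
      have : p.1 < d := by
        rcases Nat.lt_or_ge p.1 d with h' | h'
        · exact h'
        · exfalso; apply hpd
          have : p.1 = d := by omega
          have : p.2 = 0 := by omega
          exact Prod.ext (by omega) this
      rw [ih p.1 this (by omega), sub_self, zero_mul]
    · intro hmem
      exact absurd (Finset.HasAntidiagonal.mem_antidiagonal.2 (by simp)) hmem

end GravitonAux

/-- **Graviton stability.**
Let `f(q) ∈ q ℤ[[q]]` have order `α > 0`, let `χ^μ(λ)` (`μ, λ` partitions of `n`, for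
each `n`) be the character table of the symmetric groups — encoded by the second
orthogonality relation `Σ_μ χ^μ(λ) χ^μ(λ') = z_λ δ_{λ,λ'}` — and define
`I^f_N(q) = Σ_λ (f_λ(q)/z_λ) Σ_{μ : ℓ(μ) ≤ N} χ^μ(λ)²`, the outer sum over all
partitions `λ` of all sizes (only `|λ| ≤ ℓ` contributes to the coefficient of `q^ℓ`,
since `f_λ` has order `≥ α|λ| ≥ |λ|`).  Let `I^f_∞(q) = ∏_{k≥1} 1/(1 − f(q^k))` be the
multi-graviton index, encoded by the power series `P` via stabilization of partial
products.  Then the coefficient of `q^ℓ` in `I^f_N` equals that of `I^f_∞`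
for all `ℓ ≤ αN`. -/
theorem graviton_stability (f : PowerSeries ℤ) (α N : ℕ) (hα : 0 < α)
    (hord : f.order = α)
    (χ : ∀ n : ℕ, n.Partition → n.Partition → ℤ)
    (hχ : ∀ (n : ℕ) (lam lam' : n.Partition),
      ∑ μ : n.Partition, (χ n μ lam : ℚ) * χ n μ lam' =
        if lam = lam' then zOf lam else 0)
    (P : PowerSeries ℤ)
    (hP : ∀ K : ℕ, ∀ d ≤ K,
      PowerSeries.coeff (R := ℤ) d (P * ∏ k ∈ Finset.Icc 1 K, (1 - substPowerSeries f k)) =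
        if d = 0 then 1 else 0) :
    ∀ ℓ ≤ α * N,
      (∑ n ∈ Finset.range (ℓ + 1), ∑ lam : n.Partition,
        ((PowerSeries.coeff (R := ℤ) ℓ (fProd f lam) : ℚ) / zOf lam) *
          ∑ μ ∈ Finset.univ.filter fun μ : n.Partition => μ.parts.card ≤ N,
            (χ n μ lam : ℚ) ^ 2) =
      ((PowerSeries.coeff (R := ℤ) ℓ P : ℤ) : ℚ) := by
  intro ℓ hℓ
  have hA : PowerSeries.coeff (R := ℤ) 0 (∏ k ∈ Finset.Icc 1 ℓ, (1 - substPowerSeries f k)) = 1 := by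
    have hsub0 : ∀ k, PowerSeries.constantCoeff (substPowerSeries f k) = 0 := by
      intro k
      rw [← PowerSeries.coeff_zero_eq_constantCoeff]
      simp only [substPowerSeries, PowerSeries.coeff_mk, Nat.zero_div, dvd_zero, if_true]
      apply PowerSeries.coeff_of_lt_order
      rw [hord]
      exact_mod_cast hα
    rw [PowerSeries.coeff_zero_eq_constantCoeff, map_prod]
    exact Finset.prod_eq_one fun k _ => by rw [map_sub, map_one, hsub0, sub_zero]
  have hPG : PowerSeries.coeff (R := ℤ) ℓ P = PowerSeries.coeff (R := ℤ) ℓ (GravitonAux.GG f ℓ) :=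
    GravitonAux.coeff_eq_of_coeff_mul_eq _ P (GravitonAux.GG f ℓ) hA ℓ
      (fun d hd => by
        rw [hP ℓ d hd, GravitonAux.GG_mul_prod hα hord ℓ, PowerSeries.coeff_one])
      ℓ le_rfl
  have hGG : PowerSeries.coeff (R := ℤ) ℓ (GravitonAux.GG f ℓ) =
      ∑ n ∈ Finset.range (ℓ + 1), ∑ lam : n.Partition,
        PowerSeries.coeff (R := ℤ) ℓ (fProd f lam) := by
    rw [GravitonAux.GG, PowerSeries.coeff_mk]
    refine Finset.sum_congr rfl fun n hn => Finset.sum_congr rfl fun lam _ => ?_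
    rw [if_pos]
    intro j hj
    have hjn : j ≤ n := by
      have := Multiset.single_le_sum (fun x _ => Nat.zero_le x) j hj
      rwa [lam.parts_sum] at this
    have := Finset.mem_range.1 hn
    omega
  have key : ∀ n ∈ Finset.range (ℓ + 1), ∀ lam : n.Partition,
      ((PowerSeries.coeff (R := ℤ) ℓ (fProd f lam) : ℚ) / zOf lam) *
        (∑ μ ∈ Finset.univ.filter fun μ : n.Partition => μ.parts.card ≤ N,
          (χ n μ lam : ℚ) ^ 2)
      = ((PowerSeries.coeff (R := ℤ) ℓ (fProd f lam) : ℤ) : ℚ) := by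
    intro n _ lam
    by_cases hcase : α * n ≤ ℓ
    · have hnN : n ≤ N := Nat.le_of_mul_le_mul_left (le_trans hcase hℓ) hα
      have hfilter : (Finset.univ.filter fun μ : n.Partition => μ.parts.card ≤ N) =
          Finset.univ := by
        refine Finset.filter_true_of_mem fun μ _ => ?_
        have h1 : Multiset.card μ.parts • 1 ≤ μ.parts.sum :=
          Multiset.card_nsmul_le_sum fun x hx => μ.parts_pos hx
        rw [μ.parts_sum, smul_eq_mul, mul_one] at h1
        omega
      have hsum : (∑ μ : n.Partition, (χ n μ lam : ℚ) ^ 2) = zOf lam := by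
        have h2 := hχ n lam lam
        rw [if_pos rfl] at h2
        rw [← h2]
        exact Finset.sum_congr rfl fun μ _ => sq _
      have hz : zOf lam ≠ 0 := by
        have hpos : 0 < (lam.parts.toFinsupp.prod fun i r => r.factorial * i ^ r) := by
          rw [Finsupp.prod]
          apply Finset.prod_pos
          intro i hi
          have hip : 0 < i := lam.parts_pos (by
            rw [Multiset.toFinsupp_support] at hi
            exact Multiset.mem_toFinset.1 hi)
          have := Nat.factorial_pos (lam.parts.toFinsupp i)
          positivity
        have : (0 : ℚ) < zOf lam := by rw [zOf]; exact_mod_cast hpos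
        exact ne_of_gt this
      rw [hfilter, hsum, div_mul_cancel₀ _ hz]
    · have h0 : PowerSeries.coeff (R := ℤ) ℓ (fProd f lam) = 0 :=
        GravitonAux.coeff_fProd_eq_zero hα hord lam (by omega)
      rw [h0]
      simp
  rw [hPG, hGG]
  push_cast
  exact Finset.sum_congr rfl fun n hn => Finset.sum_congr rfl fun lam _ => key n hn lam

end
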